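/- arXiv:0912.3271 — 5 statements merged into one kernel-verified Lean document; each statement's English description precedes it below -/
import Mathlib

section
/- For every invertible real 3×3 matrix C there exist matrices A, B ∈ SO₀(1,2) and real numbers α, β, γ, x, y, z with α·β·γ ≠ 0 such that Aᵀ C B equals either the matrix with rows (α, x, y), (0, β, z), (0, 0, γ) or the matrix with rows (0, β, z), (α, x, y), (0, 0, γ). -/
open Matrix

set_option maxHeartbeats 1600000

/-- The Minkowski form `η = diag(-1, 1, 1)`. -/
def etaM : Matrix (Fin 3) (Fin 3) ℝ := Matrix.diagonal ![-1, 1, 1]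

/-- Membership in the proper orthochronous Lorentz group `SO₀(1,2)`. -/
def IsSO (A : Matrix (Fin 3) (Fin 3) ℝ) : Prop :=
  Aᵀ * etaM * A = etaM ∧ A.det = 1 ∧ 1 ≤ A 0 0

noncomputable section AuxLemmas

lemma eta_mul_eta : etaM * etaM = 1 := by
  ext i j
  fin_cases i <;> fin_cases j <;>
    simp [etaM, Matrix.mul_apply, Fin.sum_univ_three, Matrix.diagonal]

lemma eta_det : etaM.det = -1 := by
  simp [etaM, Matrix.det_diagonal, Fin.prod_univ_three]

/-- From `Wᵀ η W = η`, get `(det W)^2 = 1`. -/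
lemma det_sq_of_lorentz (W : Matrix (Fin 3) (Fin 3) ℝ) (h : Wᵀ * etaM * W = etaM) :
    W.det ^ 2 = 1 := by
  have := congrArg Matrix.det h
  simp only [Matrix.det_mul, Matrix.det_transpose, eta_det] at this
  nlinarith [this]

lemma lorentz_flip (W : Matrix (Fin 3) (Fin 3) ℝ) (h : Wᵀ * etaM * W = etaM) :
    W * etaM * Wᵀ = etaM := by
  have hdet : IsUnit W.det := by
    have h2 := det_sq_of_lorentz W h
    exact isUnit_iff_ne_zero.mpr (by intro h0; rw [h0] at h2; norm_num at h2)
  have hinv : etaM * Wᵀ * etaM * W = 1 := by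
    calc etaM * Wᵀ * etaM * W = etaM * (Wᵀ * etaM * W) := by noncomm_ring
    _ = 1 := by rw [h, eta_mul_eta]
  have hinv2 : W * (etaM * Wᵀ * etaM) = 1 := by
    exact mul_eq_one_comm.mp (by
      calc (etaM * Wᵀ * etaM) * W = etaM * Wᵀ * etaM * W := by noncomm_ring
      _ = 1 := hinv)
  calc W * etaM * Wᵀ = (W * (etaM * Wᵀ * etaM)) * etaM := by
        rw [show (W * (etaM * Wᵀ * etaM)) * etaM = W * etaM * Wᵀ * (etaM * etaM) by noncomm_ring,
          eta_mul_eta, mul_one]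
  _ = etaM := by rw [hinv2, one_mul]

lemma key_lemma (C B T : Matrix (Fin 3) (Fin 3) ℝ) (hC : IsUnit C.det) (hB : IsUnit B.det)
    (h : Tᵀ * etaM * T = Bᵀ * (Cᵀ * etaM * C) * B) :
    (((T * B⁻¹ * C⁻¹)ᵀ)ᵀ * etaM * (T * B⁻¹ * C⁻¹)ᵀ = etaM) ∧
      ((T * B⁻¹ * C⁻¹)ᵀ)ᵀ * C * B = T := by
  have hV : IsUnit (C * B).det := by rw [Matrix.det_mul]; exact hC.mul hB
  set V := C * B with hVdef
  set W := T * B⁻¹ * C⁻¹ with hW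
  have hWV : W = T * V⁻¹ := by rw [hW, hVdef, Matrix.mul_inv_rev, Matrix.mul_assoc]
  have h2 : Tᵀ * etaM * T = Vᵀ * etaM * V := by
    rw [h, hVdef, Matrix.transpose_mul]; noncomm_ring
  have h3 : Wᵀ * etaM * W = etaM := by
    rw [hWV, Matrix.transpose_mul, Matrix.transpose_nonsing_inv]
    calc (Vᵀ)⁻¹ * Tᵀ * etaM * (T * V⁻¹) = (Vᵀ)⁻¹ * (Tᵀ * etaM * T) * V⁻¹ := by noncomm_ring
    _ = (Vᵀ)⁻¹ * (Vᵀ * etaM * V) * V⁻¹ := by rw [h2]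
    _ = etaM := by
        rw [show (Vᵀ)⁻¹ * (Vᵀ * etaM * V) * V⁻¹ = ((Vᵀ)⁻¹ * Vᵀ) * etaM * (V * V⁻¹) by noncomm_ring,
          Matrix.nonsing_inv_mul _ (by simpa using hV), Matrix.mul_nonsing_inv _ hV, one_mul,
          mul_one]
  constructor
  · rw [Matrix.transpose_transpose]
    exact lorentz_flip W h3
  · rw [Matrix.transpose_transpose, hW]
    calc T * B⁻¹ * C⁻¹ * C * B = T * B⁻¹ * (C⁻¹ * C) * B := by noncomm_ring
    _ = T := by rw [Matrix.nonsing_inv_mul _ hC, mul_one, Matrix.mul_assoc,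
        Matrix.nonsing_inv_mul _ hB, mul_one]

/-- Minkowski inner product in coordinates. -/
def gM (x y : Fin 3 → ℝ) : ℝ := -(x 0 * y 0) + x 1 * y 1 + x 2 * y 2

/-- The `S`-product, where `S = Cᵀ η C`. -/
def GM (C : Matrix (Fin 3) (Fin 3) ℝ) (x y : Fin 3 → ℝ) : ℝ := gM (C *ᵥ x) (C *ᵥ y)

lemma GM_symm (C : Matrix (Fin 3) (Fin 3) ℝ) (x y : Fin 3 → ℝ) : GM C x y = GM C y x := by
  simp only [GM, gM]; ring

lemma GM_pair (C : Matrix (Fin 3) (Fin 3) ℝ) (p r : Fin 3 → ℝ) (x y X Y : ℝ) :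
    GM C (x•p + y•r) (X•p + Y•r) =
      x*X*GM C p p + (x*Y + y*X)*GM C p r + y*Y*GM C r r := by
  simp only [GM, gM, Matrix.mulVec_add, Matrix.mulVec_smul, Pi.add_apply, Pi.smul_apply,
    smul_eq_mul]
  ring

lemma gM_pair (p r : Fin 3 → ℝ) (x y X Y : ℝ) :
    gM (x•p + y•r) (X•p + Y•r) = x*X*gM p p + (x*Y + y*X)*gM p r + y*Y*gM r r := by
  simp only [gM, Pi.add_apply, Pi.smul_apply, smul_eq_mul]; ring

lemma quad_semidef (a b c x0 y0 : ℝ) (h0 : a*x0^2 + 2*b*x0*y0 + c*y0^2 < 0)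
    (hd : 0 ≤ a*c - b^2) : ∀ x y : ℝ, a*x^2 + 2*b*x*y + c*y^2 ≤ 0 := by
  intro x y
  rcases lt_trichotomy a 0 with ha|ha|ha
  · nlinarith [sq_nonneg (a*x + b*y), mul_nonneg hd (sq_nonneg y)]
  · subst ha
    have hb : b = 0 := by nlinarith [sq_nonneg b]
    subst hb
    have hc : c < 0 := by nlinarith [sq_nonneg y0, sq_nonneg (c*y0)]
    nlinarith [sq_nonneg y]
  · exfalso; nlinarith [sq_nonneg (a*x0 + b*y0), mul_nonneg hd (sq_nonneg y0)]

lemma exists_uv (C : Matrix (Fin 3) (Fin 3) ℝ) (hC : IsUnit C.det) :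
    ∃ u v : Fin 3 → ℝ,
      gM u u = -1 ∧ gM v v = 1 ∧ gM u v = 0 ∧ 1 ≤ u 0 ∧
      GM C u u ≠ 0 ∧ GM C u u * GM C v v - (GM C u v)^2 < 0 := by
  classical
  set e : Fin 3 → ℝ := ![1,0,0] with he
  set q : Fin 3 → ℝ := C⁻¹ *ᵥ e with hqdef
  have hCq : C *ᵥ q = e := by
    rw [hqdef, Matrix.mulVec_mulVec, Matrix.mul_nonsing_inv _ hC, Matrix.one_mulVec]
  have hGqq : GM C q q = -1 := by
    rw [GM, hCq]; simp [gM, he]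
  -- Step: find v
  obtain ⟨v, hv0, hvv12, x0, y0, hneg⟩ :
      ∃ v : Fin 3 → ℝ, v 0 = 0 ∧ v 1^2 + v 2^2 = 1 ∧
        ∃ x0 y0 : ℝ,
          GM C e e * x0^2 + 2*(GM C e v)*x0*y0 + (GM C v v)*y0^2 < 0 := by
    by_cases hcase : q 1 = 0 ∧ q 2 = 0
    · refine ⟨![0,1,0], by simp, by norm_num [Matrix.cons_val_two, Matrix.tail_cons], 1, 0, ?_⟩
      have hq0 : q = (q 0) • e := by
        funext i; fin_cases i <;> simp [he, hcase.1, hcase.2]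
      have hexp : GM C q q = (q 0)^2 * GM C e e := by
        conv_lhs => rw [hq0]
        simp only [GM, Matrix.mulVec_smul, gM, Pi.smul_apply, smul_eq_mul]; ring
      rw [hGqq] at hexp
      nlinarith [sq_nonneg (q 0)]
    · have hn2 : 0 < (q 1)^2 + (q 2)^2 := by
        rcases not_and_or.mp hcase with h|h
        · have : 0 < (q 1)^2 := (sq_nonneg _).lt_of_ne (Ne.symm (pow_ne_zero 2 h))
          nlinarith [sq_nonneg (q 2)]
        · have : 0 < (q 2)^2 := (sq_nonneg _).lt_of_ne (Ne.symm (pow_ne_zero 2 h))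
          nlinarith [sq_nonneg (q 1)]
      set s := Real.sqrt ((q 1)^2 + (q 2)^2) with hs
      have hspos : 0 < s := Real.sqrt_pos.mpr hn2
      have hs2 : s^2 = (q 1)^2 + (q 2)^2 := Real.sq_sqrt hn2.le
      refine ⟨![0, q 1 / s, q 2 / s], by simp, ?_, q 0, s, ?_⟩
      · simp only [Matrix.cons_val_zero, Matrix.cons_val_one, Matrix.cons_val_two, Matrix.tail_cons,
          Matrix.head_cons]
        field_simp
        linarith [hs2]
      · have hqsum : q = (q 0) • e + s • ![0, q 1 / s, q 2 / s] := by
          funext i; fin_cases i <;>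
            simp [he] <;> field_simp
        have hexp : GM C q q = GM C e e * (q 0)^2 +
            2*(GM C e ![0, q 1 / s, q 2 / s])*(q 0)*s +
            (GM C ![0, q 1 / s, q 2 / s] ![0, q 1 / s, q 2 / s])*s^2 := by
          conv_lhs => rw [hqsum]
          rw [GM_pair]; ring
        rw [hGqq] at hexp
        linarith [hexp]
  set ae := GM C e e with hae
  set be := GM C e v with hbe
  set ce := GM C v v with hce
  -- Step: Gram determinant negative
  have key : ae * ce - be^2 < 0 := by
    by_contra hge
    push_neg at hge
    have hsemi := quad_semidef ae be ce x0 y0 hneg hge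
    have hpos : ∀ x y : ℝ, ¬(x = 0 ∧ y = 0) → x*((C *ᵥ e) 0) + y*((C *ᵥ v) 0) = 0 →
        0 < ae*x^2 + 2*be*x*y + ce*y^2 := by
      intro x y hxy h00
      have hm : ae*x^2 + 2*be*x*y + ce*y^2 = GM C (x•e + y•v) (x•e + y•v) := by
        rw [GM_pair]; ring
      rw [hm]
      set z := C *ᵥ (x•e + y•v) with hz
      have hzsum : z = x • (C *ᵥ e) + y • (C *ᵥ v) := by
        rw [hz, Matrix.mulVec_add, Matrix.mulVec_smul, Matrix.mulVec_smul]
      have hz0 : z 0 = 0 := by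
        rw [hzsum]; simpa using h00
      have hzne : z ≠ 0 := by
        intro h0
        have hmz : x•e + y•v = 0 := by
          have : C⁻¹ *ᵥ z = C⁻¹ *ᵥ 0 := by rw [h0]
          rwa [hz, Matrix.mulVec_mulVec, Matrix.nonsing_inv_mul _ hC, Matrix.one_mulVec,
            Matrix.mulVec_zero] at this
        have hx : x = 0 := by
          have := congrFun hmz 0
          simp [he, hv0] at this
          exact this
        have hy : y = 0 := by
          have h1 := congrFun hmz 1
          have h2 := congrFun hmz 2
          simp [he, hx] at h1 h2
          rcases h1 with h1|h1
          · exact h1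
          rcases h2 with h2|h2
          · exact h2
          · exfalso; rw [h1, h2] at hvv12; norm_num at hvv12
        exact hxy ⟨hx, hy⟩
      have h1 : z 1 ≠ 0 ∨ z 2 ≠ 0 := by
        by_contra hz12
        push_neg at hz12
        apply hzne
        funext i; fin_cases i
        · exact hz0
        · exact hz12.1
        · exact hz12.2
      rw [GM]
      show 0 < gM z z
      rw [gM, hz0]
      rcases h1 with h|h
      · have : 0 < (z 1)^2 := (sq_nonneg _).lt_of_ne (Ne.symm (pow_ne_zero 2 h))
        nlinarith [sq_nonneg (z 2)]
      · have : 0 < (z 2)^2 := (sq_nonneg _).lt_of_ne (Ne.symm (pow_ne_zero 2 h))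
        nlinarith [sq_nonneg (z 1)]
    by_cases hPQ : (C *ᵥ e) 0 = 0 ∧ (C *ᵥ v) 0 = 0
    · have hx0y0 : ¬(x0 = 0 ∧ y0 = 0) := by
        rintro ⟨rfl, rfl⟩; norm_num at hneg
      have := hpos x0 y0 hx0y0 (by rw [hPQ.1, hPQ.2]; ring)
      nlinarith [hneg]
    · have hne : ¬((C *ᵥ v) 0 = 0 ∧ -((C *ᵥ e) 0) = 0) := by
        rintro ⟨h1, h2⟩
        exact hPQ ⟨by linarith, h1⟩
      have h3 := hpos ((C *ᵥ v) 0) (-((C *ᵥ e) 0)) hne (by ring)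
      have h4 := hsemi ((C *ᵥ v) 0) (-((C *ᵥ e) 0))
      linarith
  -- Step: hyperbolic rotation to make the (0,0) Gram entry nonzero
  obtain ⟨ch, sh, hchsh, hch1, hnz⟩ :
      ∃ ch sh : ℝ, ch^2 - sh^2 = 1 ∧ 1 ≤ ch ∧
        ch*ch*ae + (ch*sh + sh*ch)*be + sh*sh*ce ≠ 0 := by
    by_cases ha : ae ≠ 0
    · exact ⟨1, 0, by norm_num, le_refl 1, by simpa using ha⟩
    · push_neg at ha
      have hbne : be ≠ 0 := by
        intro h; rw [ha, h] at key; norm_num at key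
      set s2 := Real.sqrt 2 with hs2def
      have hs2 : s2^2 = 2 := Real.sq_sqrt (by norm_num)
      have hs2ge : 1 ≤ s2 := by nlinarith [Real.sqrt_nonneg 2]
      by_cases hA : s2*s2*ae + (s2*1 + 1*s2)*be + 1*1*ce ≠ 0
      · exact ⟨s2, 1, by nlinarith, hs2ge, hA⟩
      · push_neg at hA
        refine ⟨s2, -1, by nlinarith, hs2ge, ?_⟩
        intro hB
        rw [ha] at hA hB
        have : be = 0 := by nlinarith
        exact hbne this
  refine ⟨ch • e + sh • v, sh • e + ch • v, ?_, ?_, ?_, ?_, ?_, ?_⟩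
  · rw [gM_pair]
    have h1 : gM e e = -1 := by simp [gM, he]
    have h2 : gM e v = 0 := by simp [gM, he, hv0]
    have h3 : gM v v = 1 := by rw [gM, hv0]; nlinarith [hvv12]
    rw [h1, h2, h3]; nlinarith [hchsh]
  · rw [gM_pair]
    have h1 : gM e e = -1 := by simp [gM, he]
    have h2 : gM e v = 0 := by simp [gM, he, hv0]
    have h3 : gM v v = 1 := by rw [gM, hv0]; nlinarith [hvv12]
    rw [h1, h2, h3]; nlinarith [hchsh]
  · rw [gM_pair]
    have h1 : gM e e = -1 := by simp [gM, he]
    have h2 : gM e v = 0 := by simp [gM, he, hv0]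
    have h3 : gM v v = 1 := by rw [gM, hv0]; nlinarith [hvv12]
    rw [h1, h2, h3]; ring
  · have : (ch • e + sh • v) 0 = ch := by
      simp [he, hv0]
    rw [this]; exact hch1
  · rw [GM_pair]; exact hnz
  · rw [GM_pair, GM_pair, GM_pair]
    have hgr : (ch*ch*ae + (ch*sh + sh*ch)*be + sh*sh*ce) *
        (sh*sh*ae + (sh*ch + ch*sh)*be + ch*ch*ce) -
        (ch*sh*ae + (ch*ch + sh*sh)*be + sh*ch*ce)^2 =
        (ch^2 - sh^2)^2 * (ae*ce - be^2) := by ring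
    rw [hgr, hchsh]
    nlinarith [key]

/-- the Minkowski cross product completing an orthonormal pair -/
def mcross (u v : Fin 3 → ℝ) : Fin 3 → ℝ :=
  ![-(u 1 * v 2 - u 2 * v 1), u 2 * v 0 - u 0 * v 2, u 0 * v 1 - u 1 * v 0]

lemma mcross_u (u v : Fin 3 → ℝ) : gM u (mcross u v) = 0 := by simp [gM, mcross]; ring
lemma mcross_v (u v : Fin 3 → ℝ) : gM v (mcross u v) = 0 := by simp [gM, mcross]; ring
lemma mcross_self (u v : Fin 3 → ℝ) :
    gM (mcross u v) (mcross u v) = gM u v ^ 2 - gM u u * gM v v := by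
  simp [gM, mcross]; ring

def colB (u v w : Fin 3 → ℝ) : Matrix (Fin 3) (Fin 3) ℝ :=
  Matrix.of fun i j => ![u, v, w] j i

lemma colB_gram (C : Matrix (Fin 3) (Fin 3) ℝ) (u v w : Fin 3 → ℝ) :
    (colB u v w)ᵀ * (Cᵀ * etaM * C) * (colB u v w) =
      !![GM C u u, GM C u v, GM C u w;
         GM C v u, GM C v v, GM C v w;
         GM C w u, GM C w v, GM C w w] := by
  ext i j
  fin_cases i <;> fin_cases j <;>
    simp [colB, GM, gM, etaM, Matrix.mul_apply, Matrix.mulVec, dotProduct,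
      Fin.sum_univ_three, Matrix.diagonal] <;> ring

lemma colB_eta (u v w : Fin 3 → ℝ) (hu : gM u u = -1) (hv : gM v v = 1) (hw : gM w w = 1)
    (huv : gM u v = 0) (huw : gM u w = 0) (hvw : gM v w = 0) :
    (colB u v w)ᵀ * etaM * (colB u v w) = etaM := by
  simp only [gM] at hu hv hw huv huw hvw
  ext i j
  fin_cases i <;> fin_cases j <;>
    simp [colB, etaM, Matrix.mul_apply, Fin.sum_univ_three, Matrix.diagonal] <;> linarith

lemma colB_det (u v : Fin 3 → ℝ) :
    (colB u v (mcross u v)).det = gM u v ^ 2 - gM u u * gM v v := by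
  rw [Matrix.det_fin_three]
  simp [colB, mcross, gM]; ring

lemma cholesky_neg (a b c p r s : ℝ) (ha : a < 0) (hgram : a*c - b^2 < 0)
    (hdet : a*c*s - a*r^2 - b^2*s + 2*b*p*r - c*p^2 < 0) :
    ∃ α β γ x y z : ℝ, α*β*γ ≠ 0 ∧
      (!![α,x,y;0,β,z;0,0,γ])ᵀ * etaM * !![α,x,y;0,β,z;0,0,γ] = !![a,b,p;b,c,r;p,r,s] := by
  have hane : a ≠ 0 := ne_of_lt ha
  set α := Real.sqrt (-a) with hαdef
  have hαpos : 0 < α := Real.sqrt_pos.mpr (by linarith)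
  have hα2 : α^2 = -a := Real.sq_sqrt (by linarith)
  have hαne : α ≠ 0 := ne_of_gt hαpos
  have hβargpos : 0 < c - b^2/a := by
    have h1 : c - b^2/a = (a*c - b^2)/a := by field_simp
    rw [h1]
    exact div_pos_of_neg_of_neg hgram ha
  set β := Real.sqrt (c - b^2/a) with hβdef
  have hβpos : 0 < β := Real.sqrt_pos.mpr hβargpos
  have hβ2 : β^2 = c - b^2/a := Real.sq_sqrt hβargpos.le
  have hβne : β ≠ 0 := ne_of_gt hβpos
  set x := -(b/α) with hxdef
  set y := -(p/α) with hydef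
  set z := (r - b*p/a)/β with hzdef
  have hx2 : x^2 = -(b^2/a) := by
    have h' : x^2 = b^2/α^2 := by rw [hxdef]; ring
    rw [hα2, div_neg] at h'; exact h'
  have hy2 : y^2 = -(p^2/a) := by
    have h' : y^2 = p^2/α^2 := by rw [hydef]; ring
    rw [hα2, div_neg] at h'; exact h'
  have hxy : x*y = -(b*p/a) := by
    have h' : x*y = (b*p)/α^2 := by rw [hxdef, hydef]; ring
    rw [hα2, div_neg] at h'; exact h'
  have hz : β*z = r - b*p/a := by
    rw [hzdef]; field_simp; try ring
  have hγargpos : 0 < s + y^2 - z^2 := by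
    have hβ2a : a*β^2 = a*c - b^2 := by rw [hβ2]; field_simp; try ring
    have hy2a : a*y^2 = -(p^2) := by rw [hy2]; field_simp; try ring
    have hza : a*(β*z) = a*r - b*p := by rw [hz]; field_simp; try ring
    have hid2 : a * (a*β^2*(s + y^2 - z^2)) =
        a * (a*c*s - a*r^2 - b^2*s + 2*b*p*r - c*p^2) := by
      linear_combination (a*s - p^2) * hβ2a + (a*β^2) * hy2a - (a*(β*z) + a*r - b*p) * hza
    have hid : a*β^2*(s + y^2 - z^2) = a*c*s - a*r^2 - b^2*s + 2*b*p*r - c*p^2 :=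
      mul_left_cancel₀ hane hid2
    have hab2 : a*β^2 < 0 := mul_neg_of_neg_of_pos ha (by positivity)
    by_contra hcon
    push_neg at hcon
    nlinarith [mul_nonneg (neg_nonneg.mpr hab2.le) (neg_nonneg.mpr hcon)]
  set γ := Real.sqrt (s + y^2 - z^2) with hγdef
  have hγpos : 0 < γ := Real.sqrt_pos.mpr hγargpos
  have hγ2 : γ^2 = s + y^2 - z^2 := Real.sq_sqrt hγargpos.le
  refine ⟨α, β, γ, x, y, z, by positivity, ?_⟩
  have hβ2a : a*β^2 = a*c - b^2 := by rw [hβ2]; field_simp; try ring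
  have hx2a : a*x^2 = -(b^2) := by rw [hx2]; field_simp; try ring
  have hxya : a*(x*y) = -(b*p) := by rw [hxy]; field_simp; try ring
  have hza : a*(β*z) = a*r - b*p := by rw [hz]; field_simp; try ring
  have hαx : α*x = -b := by rw [hxdef]; field_simp; try ring
  have hαy : α*y = -p := by rw [hydef]; field_simp; try ring
  ext i j
  fin_cases i <;> fin_cases j <;>
    simp [etaM, Matrix.mul_apply, Matrix.transpose_apply, Fin.sum_univ_three, Matrix.diagonal,
      Matrix.vecHead, Matrix.vecTail, Matrix.transpose] <;>
    first
      | linear_combination -hα2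
      | linear_combination -hαx
      | linear_combination -hαy
      | exact mul_left_cancel₀ hane (by linear_combination hβ2a - hx2a)
      | exact mul_left_cancel₀ hane (by linear_combination hza - hxya)
      | linear_combination hγ2

lemma cholesky_pos (a b c p r s : ℝ) (ha : 0 < a) (hgram : a*c - b^2 < 0)
    (hdet : a*c*s - a*r^2 - b^2*s + 2*b*p*r - c*p^2 < 0) :
    ∃ α β γ x y z : ℝ, α*β*γ ≠ 0 ∧
      (!![0,β,z;α,x,y;0,0,γ])ᵀ * etaM * !![0,β,z;α,x,y;0,0,γ] = !![a,b,p;b,c,r;p,r,s] := by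
  have hane : a ≠ 0 := ne_of_gt ha
  set α := Real.sqrt a with hαdef
  have hαpos : 0 < α := Real.sqrt_pos.mpr ha
  have hα2 : α^2 = a := Real.sq_sqrt ha.le
  have hαne : α ≠ 0 := ne_of_gt hαpos
  have hβargpos : 0 < b^2/a - c := by
    have h1 : b^2/a - c = (b^2 - a*c)/a := by field_simp
    rw [h1]
    exact div_pos (by linarith) ha
  set β := Real.sqrt (b^2/a - c) with hβdef
  have hβpos : 0 < β := Real.sqrt_pos.mpr hβargpos
  have hβ2 : β^2 = b^2/a - c := Real.sq_sqrt hβargpos.le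
  have hβne : β ≠ 0 := ne_of_gt hβpos
  set x := b/α with hxdef
  set y := p/α with hydef
  set z := (b*p/a - r)/β with hzdef
  have hβ2a : a*β^2 = b^2 - a*c := by rw [hβ2]; field_simp
  have hx2a : a*x^2 = b^2 := by rw [hxdef, div_pow, hα2]; field_simp
  have hy2a : a*y^2 = p^2 := by rw [hydef, div_pow, hα2]; field_simp
  have hxya : a*(x*y) = b*p := by
    rw [hxdef, hydef, div_mul_div_comm, show α*α = α^2 by ring, hα2]; field_simp
  have hz : β*z = b*p/a - r := by rw [hzdef]; field_simp; try ring
  have hza : a*(β*z) = b*p - a*r := by rw [hz]; field_simp; try ring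
  have hαx : α*x = b := by rw [hxdef]; field_simp
  have hαy : α*y = p := by rw [hydef]; field_simp
  have hγargpos : 0 < s + z^2 - y^2 := by
    have hid2 : a * (a*β^2*(s + z^2 - y^2)) =
        a * (-(a*c*s - a*r^2 - b^2*s + 2*b*p*r - c*p^2)) := by
      linear_combination (a*s - p^2) * hβ2a + (a*(β*z) + b*p - a*r) * hza - (a*β^2) * hy2a
    have hid : a*β^2*(s + z^2 - y^2) = -(a*c*s - a*r^2 - b^2*s + 2*b*p*r - c*p^2) :=
      mul_left_cancel₀ hane hid2
    have hab2 : 0 < a*β^2 := by positivity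
    by_contra hcon
    push_neg at hcon
    nlinarith [mul_nonneg hab2.le (neg_nonneg.mpr hcon)]
  set γ := Real.sqrt (s + z^2 - y^2) with hγdef
  have hγpos : 0 < γ := Real.sqrt_pos.mpr hγargpos
  have hγ2 : γ^2 = s + z^2 - y^2 := Real.sq_sqrt hγargpos.le
  refine ⟨α, β, γ, x, y, z, by positivity, ?_⟩
  ext i j
  fin_cases i <;> fin_cases j <;>
    simp [etaM, Matrix.mul_apply, Matrix.transpose_apply, Fin.sum_univ_three, Matrix.diagonal,
      Matrix.vecHead, Matrix.vecTail, Matrix.transpose] <;>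
    first
      | linear_combination hα2
      | linear_combination hαx
      | linear_combination hαy
      | exact mul_left_cancel₀ hane (by linear_combination hx2a - hβ2a)
      | exact mul_left_cancel₀ hane (by linear_combination hxya - hza)
      | linear_combination hγ2

lemma sign_fix (A₀ : Matrix (Fin 3) (Fin 3) ℝ) (h : A₀ᵀ * etaM * A₀ = etaM) :
    ∃ ε₀ ε₁ : ℝ, (ε₀ = 1 ∨ ε₀ = -1) ∧ (ε₁ = 1 ∨ ε₁ = -1) ∧
      IsSO (A₀ * Matrix.diagonal ![ε₀, ε₁, 1]) := by
  classical
  have hdetsq : A₀.det ^ 2 = 1 := det_sq_of_lorentz A₀ h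
  have hdet : A₀.det = 1 ∨ A₀.det = -1 := by
    rcases mul_eq_zero.mp (show (A₀.det - 1) * (A₀.det + 1) = 0 by nlinarith) with h'|h'
    · left; linarith
    · right; linarith
  have h00 : -(A₀ 0 0 * A₀ 0 0) + A₀ 1 0 * A₀ 1 0 + A₀ 2 0 * A₀ 2 0 = -1 := by
    have := congrFun (congrFun h 0) 0
    simpa [Matrix.mul_apply, etaM, Matrix.diagonal, Fin.sum_univ_three,
      Matrix.transpose_apply] using this
  set ε₀ : ℝ := if 0 < A₀ 0 0 then 1 else -1 with hε₀def
  set ε₁ : ℝ := ε₀ * A₀.det with hε₁def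
  have hε₀ : ε₀ = 1 ∨ ε₀ = -1 := by
    rw [hε₀def]; split_ifs <;> simp
  have hε₁ : ε₁ = 1 ∨ ε₁ = -1 := by
    rw [hε₁def]
    rcases hε₀ with h'|h' <;> rcases hdet with h''|h'' <;> rw [h', h''] <;> norm_num
  refine ⟨ε₀, ε₁, hε₀, hε₁, ?_, ?_, ?_⟩
  · have hDT : (Matrix.diagonal ![ε₀, ε₁, 1])ᵀ = Matrix.diagonal ![ε₀, ε₁, (1:ℝ)] :=
      Matrix.diagonal_transpose _
    calc (A₀ * Matrix.diagonal ![ε₀, ε₁, 1])ᵀ * etaM * (A₀ * Matrix.diagonal ![ε₀, ε₁, 1])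
        = (Matrix.diagonal ![ε₀, ε₁, 1])ᵀ * (A₀ᵀ * etaM * A₀) * Matrix.diagonal ![ε₀, ε₁, 1] := by
          rw [Matrix.transpose_mul]; noncomm_ring
    _ = Matrix.diagonal ![ε₀, ε₁, 1] * etaM * Matrix.diagonal ![ε₀, ε₁, 1] := by rw [hDT, h]
    _ = etaM := by
        ext i j
        fin_cases i <;> fin_cases j <;>
          simp [etaM, Matrix.diagonal, Matrix.mul_apply, Fin.sum_univ_three] <;>
          rcases hε₀ with h'|h' <;> rcases hε₁ with h''|h'' <;> simp [h', h'']
  · rw [Matrix.det_mul, Matrix.det_diagonal, Fin.prod_univ_three]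
    simp only [Matrix.cons_val_zero, Matrix.cons_val_one, Matrix.head_cons, Matrix.cons_val_two,
      Matrix.tail_cons]
    rw [hε₁def]
    rcases hdet with h''|h'' <;> rcases hε₀ with h'|h' <;> rw [h'', h'] <;> norm_num
  · have hentry : (A₀ * Matrix.diagonal ![ε₀, ε₁, 1]) 0 0 = A₀ 0 0 * ε₀ := by
      simp [Matrix.mul_apply, Matrix.diagonal, Fin.sum_univ_three]
    rw [hentry, hε₀def]
    split_ifs with hpos
    · nlinarith [h00]
    · push_neg at hpos
      nlinarith [h00]

end AuxLemmas

/-- Every invertible real `3 × 3` matrix `C` can be brought into one of the two normal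
forms by the action `(A, C, B) ↦ Aᵀ C B` of `SO₀(1,2) × SO₀(1,2)`. -/
theorem stmt_0 (C : Matrix (Fin 3) (Fin 3) ℝ) (hC : IsUnit C) :
    ∃ A B : Matrix (Fin 3) (Fin 3) ℝ, IsSO A ∧ IsSO B ∧
      ∃ α β γ x y z : ℝ, α * β * γ ≠ 0 ∧
        (Aᵀ * C * B = !![α, x, y; 0, β, z; 0, 0, γ] ∨
          Aᵀ * C * B = !![0, β, z; α, x, y; 0, 0, γ]) := by
  classical
  have hCdet : IsUnit C.det := (Matrix.isUnit_iff_isUnit_det C).mp hC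
  have hCne : C.det ≠ 0 := hCdet.ne_zero
  obtain ⟨u, v, hu, hv, huv, hu0, hAne, hgram⟩ := exists_uv C hCdet
  set w := mcross u v with hwdef
  have hww : gM w w = 1 := by rw [hwdef, mcross_self, hu, hv, huv]; norm_num
  have huw : gM u w = 0 := by rw [hwdef]; exact mcross_u u v
  have hvw : gM v w = 0 := by rw [hwdef]; exact mcross_v u v
  have hBeta := colB_eta u v w hu hv hww huv huw hvw
  have hBdet : (colB u v w).det = 1 := by
    rw [hwdef, colB_det, hu, hv, huv]; norm_num
  have hB00 : 1 ≤ (colB u v w) 0 0 := by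
    have hbb : (colB u v w) 0 0 = u 0 := by simp [colB]
    rw [hbb]; exact hu0
  have hBunit : IsUnit (colB u v w).det := by rw [hBdet]; exact isUnit_one
  have hBso : IsSO (colB u v w) := ⟨hBeta, hBdet, hB00⟩
  set a := GM C u u with hadef
  set b := GM C u v with hbdef
  set p := GM C u w with hpdef
  set c := GM C v v with hcdef
  set r := GM C v w with hrdef
  set s := GM C w w with hsdef
  have hMeq : (colB u v w)ᵀ * (Cᵀ * etaM * C) * (colB u v w) =
      !![a, b, p; b, c, r; p, r, s] := by
    rw [colB_gram, GM_symm C v u, GM_symm C w u, GM_symm C w v]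
  have hdet2pos : 0 < C.det^2 := by positivity
  have hMdet : (!![a, b, p; b, c, r; p, r, s] :
      Matrix (Fin 3) (Fin 3) ℝ).det = -(C.det^2) := by
    rw [← hMeq, Matrix.det_mul, Matrix.det_mul, Matrix.det_mul, Matrix.det_mul,
      Matrix.det_transpose, hBdet, Matrix.det_transpose, eta_det]
    ring
  have hdetpoly : a*c*s - a*r^2 - b^2*s + 2*b*p*r - c*p^2 < 0 := by
    rw [Matrix.det_fin_three] at hMdet
    simp only [Matrix.cons_val', Matrix.cons_val_zero, Matrix.cons_val_one, Matrix.head_cons,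
      Matrix.empty_val', Matrix.cons_val_fin_one, Matrix.head_fin_const,
      Matrix.of_apply, Matrix.cons_val_two, Matrix.tail_cons] at hMdet
    nlinarith [hMdet, hdet2pos]
  rcases lt_trichotomy a 0 with haneg|hzero|hapos
  · obtain ⟨α, β, γ, x, y, z, habc, hT⟩ := cholesky_neg a b c p r s haneg hgram hdetpoly
    have hαne : α ≠ 0 := fun h => habc (by rw [h]; ring)
    have hβne : β ≠ 0 := fun h => habc (by rw [h]; ring)
    have hγne : γ ≠ 0 := fun h => habc (by rw [h]; ring)
    have hTdet : (!![α,x,y;0,β,z;0,0,γ] : Matrix (Fin 3) (Fin 3) ℝ).det = α*β*γ := by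
      rw [Matrix.det_fin_three]
      simp only [Matrix.cons_val', Matrix.cons_val_zero, Matrix.cons_val_one, Matrix.head_cons,
        Matrix.empty_val', Matrix.cons_val_fin_one, Matrix.head_fin_const, Matrix.of_apply,
        Matrix.cons_val_two, Matrix.tail_cons]
      ring
    have hTunit : IsUnit (!![α,x,y;0,β,z;0,0,γ] : Matrix (Fin 3) (Fin 3) ℝ).det := by
      rw [hTdet]; exact isUnit_iff_ne_zero.mpr habc
    have hTeq : (!![α,x,y;0,β,z;0,0,γ])ᵀ * etaM * !![α,x,y;0,β,z;0,0,γ] =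
        (colB u v w)ᵀ * (Cᵀ * etaM * C) * (colB u v w) := by
      rw [hT, hMeq]
    obtain ⟨hA1, hA2⟩ := key_lemma C (colB u v w) !![α,x,y;0,β,z;0,0,γ] hCdet hBunit hTeq
    set A₀ := (!![α,x,y;0,β,z;0,0,γ] * (colB u v w)⁻¹ * C⁻¹)ᵀ with hA₀def
    obtain ⟨ε₀, ε₁, hε₀, hε₁, hASO⟩ := sign_fix A₀ hA1
    have hε₀ne : ε₀ ≠ 0 := by rcases hε₀ with rfl|rfl <;> norm_num
    have hε₁ne : ε₁ ≠ 0 := by rcases hε₁ with rfl|rfl <;> norm_num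
    refine ⟨A₀ * Matrix.diagonal ![ε₀, ε₁, 1], colB u v w, hASO, hBso,
      ε₀*α, ε₁*β, γ, ε₀*x, ε₀*y, ε₁*z,
      mul_ne_zero (mul_ne_zero (mul_ne_zero hε₀ne hαne) (mul_ne_zero hε₁ne hβne)) hγne,
      Or.inl ?_⟩
    have hstep : (A₀ * Matrix.diagonal ![ε₀, ε₁, 1])ᵀ * C * (colB u v w) =
        Matrix.diagonal ![ε₀, ε₁, 1] * !![α,x,y;0,β,z;0,0,γ] := by
      rw [Matrix.transpose_mul, Matrix.diagonal_transpose]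
      calc Matrix.diagonal ![ε₀, ε₁, 1] * A₀ᵀ * C * (colB u v w)
          = Matrix.diagonal ![ε₀, ε₁, 1] * (A₀ᵀ * C * (colB u v w)) := by noncomm_ring
      _ = _ := by rw [hA2]
    rw [hstep]
    ext i j
    fin_cases i <;> fin_cases j <;>
      simp [Matrix.diagonal, Matrix.mul_apply, Fin.sum_univ_three] <;> ring
  · exact absurd hzero hAne
  · obtain ⟨α, β, γ, x, y, z, habc, hT⟩ := cholesky_pos a b c p r s hapos hgram hdetpoly
    have hαne : α ≠ 0 := fun h => habc (by rw [h]; ring)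
    have hβne : β ≠ 0 := fun h => habc (by rw [h]; ring)
    have hγne : γ ≠ 0 := fun h => habc (by rw [h]; ring)
    have hTdet : (!![0,β,z;α,x,y;0,0,γ] : Matrix (Fin 3) (Fin 3) ℝ).det = -(α*β*γ) := by
      rw [Matrix.det_fin_three]
      simp only [Matrix.cons_val', Matrix.cons_val_zero, Matrix.cons_val_one, Matrix.head_cons,
        Matrix.empty_val', Matrix.cons_val_fin_one, Matrix.head_fin_const, Matrix.of_apply,
        Matrix.cons_val_two, Matrix.tail_cons]
      ring
    have hTunit : IsUnit (!![0,β,z;α,x,y;0,0,γ] : Matrix (Fin 3) (Fin 3) ℝ).det := by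
      rw [hTdet]; exact isUnit_iff_ne_zero.mpr (by simpa using habc)
    have hTeq : (!![0,β,z;α,x,y;0,0,γ])ᵀ * etaM * !![0,β,z;α,x,y;0,0,γ] =
        (colB u v w)ᵀ * (Cᵀ * etaM * C) * (colB u v w) := by
      rw [hT, hMeq]
    obtain ⟨hA1, hA2⟩ := key_lemma C (colB u v w) !![0,β,z;α,x,y;0,0,γ] hCdet hBunit hTeq
    set A₀ := (!![0,β,z;α,x,y;0,0,γ] * (colB u v w)⁻¹ * C⁻¹)ᵀ with hA₀def
    obtain ⟨ε₀, ε₁, hε₀, hε₁, hASO⟩ := sign_fix A₀ hA1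
    have hε₀ne : ε₀ ≠ 0 := by rcases hε₀ with rfl|rfl <;> norm_num
    have hε₁ne : ε₁ ≠ 0 := by rcases hε₁ with rfl|rfl <;> norm_num
    refine ⟨A₀ * Matrix.diagonal ![ε₀, ε₁, 1], colB u v w, hASO, hBso,
      ε₁*α, ε₀*β, γ, ε₁*x, ε₁*y, ε₀*z,
      mul_ne_zero (mul_ne_zero (mul_ne_zero hε₁ne hαne) (mul_ne_zero hε₀ne hβne)) hγne,
      Or.inr ?_⟩
    have hstep : (A₀ * Matrix.diagonal ![ε₀, ε₁, 1])ᵀ * C * (colB u v w) =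
        Matrix.diagonal ![ε₀, ε₁, 1] * !![0,β,z;α,x,y;0,0,γ] := by
      rw [Matrix.transpose_mul, Matrix.diagonal_transpose]
      calc Matrix.diagonal ![ε₀, ε₁, 1] * A₀ᵀ * C * (colB u v w)
          = Matrix.diagonal ![ε₀, ε₁, 1] * (A₀ᵀ * C * (colB u v w)) := by noncomm_ring
      _ = _ := by rw [hA2]
    rw [hstep]
    ext i j
    fin_cases i <;> fin_cases j <;>
      simp [Matrix.diagonal, Matrix.mul_apply, Fin.sum_univ_three] <;> ring
end

section
/- Let C be an invertible real 3×3 matrix with C₁₁ = C₂₁ ≠ 0 and C₃₁ = C₃₂ = 0. Then there exist q₁, q₂ ∈ ℝ such that B(q₁)ᵀ C B(q₂) is upper triangular. -/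
open Matrix

/-- The hyperbolic boost `B(q) ∈ SO₀(1,2)`. -/
noncomputable def Bq (q : ℝ) : Matrix (Fin 3) (Fin 3) ℝ :=
  !![Real.cosh q, Real.sinh q, 0; Real.sinh q, Real.cosh q, 0; 0, 0, 1]

set_option maxHeartbeats 1000000 in
/-- If `C` is invertible with `C₁₁ = C₂₁ ≠ 0` and `C₃₁ = C₃₂ = 0`, then there are
`q₁, q₂ ∈ ℝ` such that `B(q₁)ᵀ C B(q₂)` is upper triangular. -/
theorem stmt_1 (C : Matrix (Fin 3) (Fin 3) ℝ) (hC : IsUnit C)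
    (h11 : C 0 0 = C 1 0) (hne : C 0 0 ≠ 0) (h31 : C 2 0 = 0) (h32 : C 2 1 = 0) :
    ∃ q₁ q₂ : ℝ, ∀ i j : Fin 3, j < i → ((Bq q₁)ᵀ * C * Bq q₂) i j = 0 := by
  have hdet : C.det ≠ 0 := ((Matrix.isUnit_iff_isUnit_det C).mp hC).ne_zero
  set a := C 0 0 with ha
  have hd : C 1 1 - C 0 1 ≠ 0 := by
    intro h
    apply hdet
    have h' : C 1 1 = C 0 1 := by linarith
    rw [Matrix.det_fin_three, h31, h32, ← h11, h']
    ring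
  set d : ℝ := C 1 1 - C 0 1 with hdd
  set p : ℝ := 2 * a + C 0 1 + C 1 1 with hp
  set m : ℝ := 2 * a - C 0 1 - C 1 1 with hm
  set U : ℝ := |d| / (|p| + |m| + 1) with hU
  have hUpos : 0 < U := by
    apply div_pos (abs_pos.mpr hd)
    positivity
  have hUp : U * |p| < |d| := by
    rw [hU, div_mul_eq_mul_div, div_lt_iff₀ (by positivity)]
    have h1 : 0 < |d| := abs_pos.mpr hd
    nlinarith [abs_nonneg p, abs_nonneg m]
  have hUm : U * |m| < |d| := by
    rw [hU, div_mul_eq_mul_div, div_lt_iff₀ (by positivity)]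
    have h1 : 0 < |d| := abs_pos.mpr hd
    nlinarith [abs_nonneg p, abs_nonneg m]
  have habs : |d| * |d| = d * d := abs_mul_abs_self d
  have hdabs : 0 < |d| := abs_pos.mpr hd
  have kp : -(|d| * |p|) ≤ d * p := by rw [← abs_mul]; exact neg_abs_le _
  have km : -(|d| * |m|) ≤ d * (-m) := by
    have := neg_abs_le (d * (-m)); rw [abs_mul, abs_neg] at this; linarith
  have hA : 0 < d * (U * p + d) := by
    nlinarith [mul_le_mul_of_nonneg_left kp hUpos.le, mul_lt_mul_of_pos_right hUp hdabs]
  have hB : 0 < d * (d - U * m) := by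
    nlinarith [mul_le_mul_of_nonneg_left km hUpos.le, mul_lt_mul_of_pos_right hUm hdabs]
  have hApos : U * p + d ≠ 0 := by
    intro h; rw [h, mul_zero] at hA; exact lt_irrefl 0 hA
  set V : ℝ := (d - U * m) / (U * p + d) with hV
  have hVpos : 0 < V := by
    rw [hV]
    rcases lt_or_gt_of_ne hApos with h | h
    · have hdneg : d < 0 := by nlinarith
      have : d - U * m < 0 := by nlinarith
      exact div_pos_of_neg_of_neg this h
    · have hdpos : 0 < d := by nlinarith
      have : 0 < d - U * m := by nlinarith
      exact div_pos this h
  have hVeq : V * (U * p + d) = d - U * m := div_mul_cancel₀ _ hApos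
  set u : ℝ := Real.sqrt U with hu
  set v : ℝ := Real.sqrt V with hv
  have hupos : 0 < u := Real.sqrt_pos.mpr hUpos
  have hvpos : 0 < v := Real.sqrt_pos.mpr hVpos
  have hu2 : u * u = U := Real.mul_self_sqrt hUpos.le
  have hv2 : v * v = V := Real.mul_self_sqrt hVpos.le
  have hc1 : Real.cosh (Real.log u) = (u + u⁻¹) / 2 := Real.cosh_log hupos
  have hs1 : Real.sinh (Real.log u) = (u - u⁻¹) / 2 := Real.sinh_log hupos
  have hc2 : Real.cosh (Real.log v) = (v + v⁻¹) / 2 := Real.cosh_log hvpos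
  have hs2 : Real.sinh (Real.log v) = (v - v⁻¹) / 2 := Real.sinh_log hvpos
  refine ⟨Real.log u, Real.log v, ?_⟩
  have e10 : ((Bq (Real.log u))ᵀ * C * Bq (Real.log v)) 1 0 = 0 := by
    simp only [Bq, Matrix.mul_apply, Matrix.transpose_apply, Fin.sum_univ_three]
    simp
    rw [hc1, hs1, hc2, hs2]
    have hune : u ≠ 0 := ne_of_gt hupos
    have hvne : v ≠ 0 := ne_of_gt hvpos
    field_simp
    rw [hp, hm, hdd, ha] at hVeq
    linear_combination hVeq - (U + 1) * (V + 1) * (ha.symm.trans h11) +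
      ((v * v + 1) * (C 0 0 + C 1 0) + (v * v - 1) * (C 0 1 + C 1 1)) * hu2 +
      ((U - 1) * C 0 0 + (U + 1) * C 1 0 + (U - 1) * C 0 1 + (U + 1) * C 1 1) * hv2
  have e20 : ((Bq (Real.log u))ᵀ * C * Bq (Real.log v)) 2 0 = 0 := by
    simp only [Bq, Matrix.mul_apply, Matrix.transpose_apply, Fin.sum_univ_three]
    simp [h31, h32]
  have e21 : ((Bq (Real.log u))ᵀ * C * Bq (Real.log v)) 2 1 = 0 := by
    simp only [Bq, Matrix.mul_apply, Matrix.transpose_apply, Fin.sum_univ_three]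
    simp [h31, h32]
  intro i j hij
  fin_cases i <;> fin_cases j <;>
    first
      | exact absurd hij (by decide)
      | exact e10
      | exact e20
      | exact e21
end

section
/- Let τ ∈ {1, −1}, let α, β, γ, m be nonzero real numbers and let x, y, z be real numbers satisfying the nine equations: (αβ − mγ)x = −αyz; (ταγ − mβ)y = −mxz; (τβγ − mα)z = τγxy; x² + y² + z² − α² + β² + τγ² = 2mβγ/α; z(x² + y² + z² − α² + β² + τγ²) = −2βxy; x² − y² − z² + α² − β² + τγ² = 2mαγ/β − 2xyz/β; y(−x² − y² + z² + α² − β² + τγ²) = −2βzx; −x² + y² − z² + α² + β² − τγ² = 2τmαβ/γ; x(−x² − y² − z² + α² + β² − τγ²) = −2βyz. Then x = y = z = 0. -/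
/-- The nine coefficient equations of the second nearly ε-Kähler equation on
`𝔰𝔩(2,ℝ) ⊕ 𝔰𝔩(2,ℝ)` force `x = y = z = 0`. -/
theorem stmt_4 (τ α β γ m x y z : ℝ) (hτ : τ = 1 ∨ τ = -1)
    (hα : α ≠ 0) (hβ : β ≠ 0) (hγ : γ ≠ 0) (hm : m ≠ 0)
    (e1 : (α * β - m * γ) * x = -(α * y * z))
    (e2 : (τ * α * γ - m * β) * y = -(m * x * z))
    (e3 : (τ * β * γ - m * α) * z = τ * γ * x * y)
    (e4 : x ^ 2 + y ^ 2 + z ^ 2 - α ^ 2 + β ^ 2 + τ * γ ^ 2 = 2 * m * β * γ / α)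
    (e5 : z * (x ^ 2 + y ^ 2 + z ^ 2 - α ^ 2 + β ^ 2 + τ * γ ^ 2) = -(2 * β * x * y))
    (e6 : x ^ 2 - y ^ 2 - z ^ 2 + α ^ 2 - β ^ 2 + τ * γ ^ 2
            = 2 * m * α * γ / β - 2 * x * y * z / β)
    (e7 : y * (-x ^ 2 - y ^ 2 + z ^ 2 + α ^ 2 - β ^ 2 + τ * γ ^ 2) = -(2 * β * z * x))
    (e8 : -x ^ 2 + y ^ 2 - z ^ 2 + α ^ 2 + β ^ 2 - τ * γ ^ 2 = 2 * τ * m * α * β / γ)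
    (e9 : x * (-x ^ 2 - y ^ 2 - z ^ 2 + α ^ 2 + β ^ 2 - τ * γ ^ 2) = -(2 * β * y * z)) :
    x = 0 ∧ y = 0 ∧ z = 0 := by
  have hτ2 : τ ^ 2 = 1 := by rcases hτ with h | h <;> rw [h] <;> norm_num
  have hτ0 : τ ≠ 0 := by rcases hτ with h | h <;> rw [h] <;> norm_num
  have h2 : (2 : ℝ) ≠ 0 := by norm_num
  -- cleared-denominator versions
  have E4α : α * (x ^ 2 + y ^ 2 + z ^ 2 - α ^ 2 + β ^ 2 + τ * γ ^ 2) = 2 * m * β * γ := by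
    rw [e4]; field_simp
  have E8γ : γ * (-x ^ 2 + y ^ 2 - z ^ 2 + α ^ 2 + β ^ 2 - τ * γ ^ 2) = 2 * τ * m * α * β := by
    rw [e8]; field_simp
  have h6 : β * (x ^ 2 - y ^ 2 - z ^ 2 + α ^ 2 - β ^ 2 + τ * γ ^ 2)
      = 2 * m * α * γ - 2 * x * y * z := by
    rw [e6]; field_simp
  -- key relation (A): m γ z = - α x y
  have h1 : (2 * β) * (m * γ * z) = (2 * β) * (-(α * x * y)) := by
    linear_combination α * e5 - z * E4α
  have hA : m * γ * z = -(α * x * y) := mul_left_cancel₀ (mul_ne_zero h2 hβ) h1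
  rcases eq_or_ne z 0 with hz | hz
  · -- case z = 0
    subst hz
    have hxy0 : α * (x * y) = 0 := by linear_combination hA
    have hxy : x * y = 0 := by
      rcases mul_eq_zero.mp hxy0 with h | h
      · exact absurd h hα
      · exact h
    rcases mul_eq_zero.mp hxy with hx0 | hy0
    · subst hx0
      refine ⟨rfl, ?_, rfl⟩
      by_contra hy
      have h70 : y * (α ^ 2 - β ^ 2 + τ * γ ^ 2 - y ^ 2) = 0 := by linear_combination e7
      have hbr := (mul_eq_zero.mp h70).resolve_left hy
      have hcon : 2 * (m * (α * γ)) = 0 := by linear_combination β * hbr - h6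
      exact absurd hcon
        (mul_ne_zero h2 (mul_ne_zero hm (mul_ne_zero hα hγ)))
    · subst hy0
      refine ⟨?_, rfl, rfl⟩
      by_contra hx
      have h90 : x * (α ^ 2 + β ^ 2 - τ * γ ^ 2 - x ^ 2) = 0 := by linear_combination e9
      have hbr := (mul_eq_zero.mp h90).resolve_left hx
      have hcon : 2 * (τ * (m * (α * β))) = 0 := by linear_combination γ * hbr - E8γ
      exact absurd hcon
        (mul_ne_zero h2 (mul_ne_zero hτ0 (mul_ne_zero hm (mul_ne_zero hα hβ))))
  · -- case z ≠ 0 : derive a contradiction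
    exfalso
    have h3 : z * (τ * α * β * γ - m * α ^ 2 + τ * m * γ ^ 2) = 0 := by
      linear_combination α * e3 + τ * γ * hA
    have hS : τ * α * β * γ - m * α ^ 2 + τ * m * γ ^ 2 = 0 :=
      (mul_eq_zero.mp h3).resolve_left hz
    have hx : x ≠ 0 := by
      intro h
      apply hz
      rw [h] at hA
      have : m * (γ * z) = 0 := by linear_combination hA
      rcases mul_eq_zero.mp this with h' | h'
      · exact absurd h' hm
      · rcases mul_eq_zero.mp h' with h'' | h''
        · exact absurd h'' hγ
        · exact h''
    have hBB : τ * m * α * β * x - γ * x * y ^ 2 = -(β * γ * y * z) := by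
      linear_combination (γ / 2) * e9 - (x / 2) * E8γ
    have hB : x * (α * β ^ 2 * γ - m * β * γ ^ 2 + α * γ * y ^ 2 - τ * m * α ^ 2 * β) = 0 := by
      linear_combination β * γ * e1 - α * hBB
    have hC : α * β ^ 2 * γ - m * β * γ ^ 2 + α * γ * y ^ 2 - τ * m * α ^ 2 * β = 0 :=
      (mul_eq_zero.mp hB).resolve_left hx
    have hG : γ * (α * y ^ 2) = γ * (2 * m * β * γ) := by
      linear_combination hC - τ * β * hS + (α * β ^ 2 * γ + m * β * γ ^ 2) * hτ2
    have hY2 : α * y ^ 2 = 2 * m * β * γ := mul_left_cancel₀ hγ hG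
    have hY : α * (τ * α * γ - m * β) * y ^ 2 = m ^ 2 * γ * z ^ 2 := by
      linear_combination α * y * e2 - m * z * hA
    have hZγ : (m * (m * γ)) * z ^ 2 = (m * (m * γ)) * (2 * α ^ 2 - 2 * β ^ 2 - 2 * τ * γ ^ 2) := by
      linear_combination (-1 : ℝ) * hY + (τ * α * γ - m * β) * hY2 + 2 * m * γ * hS
    have hZ : z ^ 2 = 2 * α ^ 2 - 2 * β ^ 2 - 2 * τ * γ ^ 2 :=
      mul_left_cancel₀ (mul_ne_zero hm (mul_ne_zero hm hγ)) hZγ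
    have hfin : α * (2 * x ^ 2 + z ^ 2) = 0 := by
      linear_combination 2 * E4α - 2 * hY2 - α * hZ
    have h2xz : 2 * x ^ 2 + z ^ 2 = 0 := by
      rcases mul_eq_zero.mp hfin with h | h
      · exact absurd h hα
      · exact h
    have hz2 : z ^ 2 = 0 := by linarith [sq_nonneg x, sq_nonneg z]
    exact hz (sq_eq_zero_iff.mp hz2)
end

section
/- Let τ ∈ {1, −1}, let α, β, γ be nonzero real numbers and let c₂ ∈ ℝ. Set c₁ := α² + β² + τγ². If 2α⁴ − c₁α² − c₂ = 0, 2β⁴ − c₁β² − c₂ = 0 and 2γ⁴ − τc₁γ² − c₂ = 0, then τ = 1 and α² = β² = γ². -/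
/-- If `α², β², τγ²` are roots of the quadratic `2t² - c₁t - c₂` with
`c₁ = α² + β² + τγ²` and `αβγ ≠ 0`, then `τ = 1` and `α² = β² = γ²`. -/
theorem stmt_5 (τ α β γ c₁ c₂ : ℝ) (hτ : τ = 1 ∨ τ = -1)
    (hα : α ≠ 0) (hβ : β ≠ 0) (hγ : γ ≠ 0)
    (hc₁ : c₁ = α ^ 2 + β ^ 2 + τ * γ ^ 2)
    (h1 : 2 * α ^ 4 - c₁ * α ^ 2 - c₂ = 0)
    (h2 : 2 * β ^ 4 - c₁ * β ^ 2 - c₂ = 0)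
    (h3 : 2 * γ ^ 4 - τ * c₁ * γ ^ 2 - c₂ = 0) :
    τ = 1 ∧ α ^ 2 = β ^ 2 ∧ β ^ 2 = γ ^ 2 := by
  have hτ2 : τ ^ 2 = 1 := by rcases hτ with h | h <;> rw [h] <;> norm_num
  have ha2 : 0 < α ^ 2 := by positivity
  have hb2 : 0 < β ^ 2 := by positivity
  have hg2 : 0 < γ ^ 2 := by positivity
  have key1 : (α ^ 2 - β ^ 2) * (2 * (α ^ 2 + β ^ 2) - c₁) = 0 := by
    linear_combination h1 - h2
  have key2 : (α ^ 2 - τ * γ ^ 2) * (2 * (α ^ 2 + τ * γ ^ 2) - c₁) = 0 := by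
    linear_combination h1 - h3 - 2 * γ ^ 4 * hτ2
  rcases mul_eq_zero.mp key1 with h | h
  · have hab : α ^ 2 = β ^ 2 := by linarith [sub_eq_zero.mp h]
    rcases mul_eq_zero.mp key2 with h' | h'
    · have hag : α ^ 2 = τ * γ ^ 2 := sub_eq_zero.mp h'
      rcases hτ with ht | ht
      · exact ⟨ht, hab, by rw [ht] at hag; linarith⟩
      · exfalso; rw [ht] at hag; nlinarith
    · exfalso
      have h'' : 2 * (α ^ 2 + τ * γ ^ 2) - c₁ = 0 := sub_eq_zero.mpr (sub_eq_zero.mp h') ▸ h'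
      rcases hτ with ht | ht <;> rw [ht] at h'' <;> rw [hc₁, ht] at h'' <;> linarith
  · exfalso
    have hsum : 2 * (α ^ 2 + β ^ 2) = c₁ := by linarith [sub_eq_zero.mp h]
    have hg : τ * γ ^ 2 = α ^ 2 + β ^ 2 := by rw [hc₁] at hsum; linarith
    rcases mul_eq_zero.mp key2 with h' | h'
    · have := sub_eq_zero.mp h'; rw [hg] at this; linarith
    · have := sub_eq_zero.mp h'; rw [hg] at this; linarith
end

section
/- Set ω := (√3/18)(e¹⁴ + e²⁵ + e³⁶), ψ⁺ := (√3/54)(e¹²⁶ − e¹³⁵ + e¹⁵⁶ − e²³⁴ + e²⁴⁶ − e³⁴⁵) and ψ⁻ := −(1/54)(2e¹²³ + e¹²⁶ − e¹³⁵ − e¹⁵⁶ − e²³⁴ − e²⁴⁶ + e³⁴⁵ + 2e⁴⁵⁶). Then dω = 3ψ⁺ and dψ⁻ = 2 ω ∧ ω. -/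
open Finset

/-- Model of the exterior algebra of `(ℝ⁶)*`: an element is given by its coefficients
with respect to the basis monomials `e^S = e^{i₁} ∧ … ∧ e^{i_k}`, `S = {i₁ < … < i_k}`. -/
abbrev E : Type := Finset (Fin 6) → ℝ

/-- The wedge product in this model: the sign is the parity of the number of
inversions when merging the (sorted) index sets. -/
noncomputable def wedge (a b : E) : E := fun S =>
  ∑ T ∈ S.powerset,
    (-1 : ℝ) ^ (((T ×ˢ (S \ T)).filter (fun p => p.2 < p.1)).card) * a T * b (S \ T)

/-- The basis monomial `e^S`. -/
def bas (S : Finset (Fin 6)) : E := fun T => if T = S then 1 else 0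

/-- The volume form `vol = e^{123456}`. -/
noncomputable def vol : E := bas Finset.univ

/-- Interior product (contraction) `v ⌟ a` of a vector `v ∈ ℝ⁶` with a form `a`. -/
noncomputable def contr (v : Fin 6 → ℝ) (a : E) : E := fun S =>
  ∑ i : Fin 6,
    if i ∈ S then 0
    else (-1 : ℝ) ^ ((S.filter (fun s => s < i)).card) * v i * a (insert i S)

/-- `a` is a `k`-form, i.e. concentrated in degree `k`. -/
def IsForm (k : ℕ) (a : E) : Prop := ∀ S, S.card ≠ k → a S = 0

/-- The differential on the generators (`0`-indexed): `de¹ = -e²³`, `de² = e³¹ = -e¹³`,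
`de³ = e¹²`, `de⁴ = -e⁵⁶`, `de⁵ = e⁶⁴ = -e⁴⁶`, `de⁶ = e⁴⁵`
(the structure constants of `𝔰𝔬(1,2) ⊕ 𝔰𝔬(1,2) ≅ 𝔰𝔩(2,ℝ) ⊕ 𝔰𝔩(2,ℝ)`). -/
noncomputable def dgen : Fin 6 → E := fun i =>
  if i = 0 then -bas {1, 2}
  else if i = 1 then -bas {0, 2}
  else if i = 2 then bas {0, 1}
  else if i = 3 then -bas {4, 5}
  else if i = 4 then -bas {3, 5}
  else bas {3, 4}

/-- The Chevalley–Eilenberg differential: the unique degree `+1` antiderivation of the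
exterior algebra extending `dgen`; on a basis monomial `e^S`, `S = {i₁ < … < i_k}`, it is
`d(e^S) = ∑ₜ (-1)^{t-1} e^{S \ {i_t}} ∧ d(e^{i_t})`, extended linearly. -/
noncomputable def d (a : E) : E :=
  ∑ S : Finset (Fin 6), ∑ t ∈ S,
    (a S * (-1 : ℝ) ^ ((S.filter (fun s => s < t)).card)) • wedge (bas (S.erase t)) (dgen t)

/-- The fundamental 2-form of the nearly pseudo-Kähler structure on `SL(2,ℝ) × SL(2,ℝ)`:
`ω = (√3/18)(e¹⁴ + e²⁵ + e³⁶)`. -/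
noncomputable def omega0 : E := (Real.sqrt 3 / 18) • (bas {0, 3} + bas {1, 4} + bas {2, 5})

/-- `ψ⁺ = (√3/54)(e¹²⁶ - e¹³⁵ + e¹⁵⁶ - e²³⁴ + e²⁴⁶ - e³⁴⁵)`. -/
noncomputable def psiP0 : E :=
  (Real.sqrt 3 / 54) •
    (bas {0, 1, 5} - bas {0, 2, 4} + bas {0, 4, 5} - bas {1, 2, 3} + bas {1, 3, 5}
      - bas {2, 3, 4})

/-- `ψ⁻ = -(1/54)(2e¹²³ + e¹²⁶ - e¹³⁵ - e¹⁵⁶ - e²³⁴ - e²⁴⁶ + e³⁴⁵ + 2e⁴⁵⁶)`. -/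
noncomputable def psiM0 : E :=
  (-(1 / 54) : ℝ) •
    ((2 : ℝ) • bas {0, 1, 2} + bas {0, 1, 5} - bas {0, 2, 4} - bas {0, 4, 5}
      - bas {1, 2, 3} - bas {1, 3, 5} + bas {2, 3, 4} + (2 : ℝ) • bas {3, 4, 5})


/-! ### Auxiliary integer model and transfer machinery -/

/-- Integer mirror of `E`. -/
abbrev EZ : Type := Finset (Fin 6) → ℤ

/-- Integer mirror of `wedge`. -/
def wedgeZ (a b : EZ) : EZ := fun S =>
  ∑ T ∈ S.powerset,
    (-1 : ℤ) ^ (((T ×ˢ (S \ T)).filter (fun p => p.2 < p.1)).card) * a T * b (S \ T)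

/-- Integer mirror of `bas`. -/
def basZ (S : Finset (Fin 6)) : EZ := fun T => if T = S then 1 else 0

/-- Integer mirror of `dgen`. -/
def dgenZ : Fin 6 → EZ := fun i =>
  if i = 0 then -basZ {1, 2}
  else if i = 1 then -basZ {0, 2}
  else if i = 2 then basZ {0, 1}
  else if i = 3 then -basZ {4, 5}
  else if i = 4 then -basZ {3, 5}
  else basZ {3, 4}

/-- Integer mirror of the differential of a single basis monomial (pointwise). -/
def dbZ (S0 : Finset (Fin 6)) : EZ := fun T =>
  ∑ t ∈ S0, (-1 : ℤ) ^ ((S0.filter (fun s => s < t)).card) *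
    wedgeZ (basZ (S0.erase t)) (dgenZ t) T

/-- Coefficientwise coercion `EZ → E`. -/
noncomputable def liftZ (a : EZ) : E := fun S => ((a S : ℤ) : ℝ)

lemma liftZ_apply (a : EZ) (S : Finset (Fin 6)) : liftZ a S = (a S : ℝ) := rfl

lemma wedge_liftZ (a b : EZ) : wedge (liftZ a) (liftZ b) = liftZ (wedgeZ a b) := by
  funext S
  simp only [wedge, wedgeZ, liftZ_apply]
  push_cast
  rfl

lemma bas_eq_liftZ (S : Finset (Fin 6)) : bas S = liftZ (basZ S) := by
  funext T; simp [bas, basZ, liftZ_apply, apply_ite (fun z : ℤ => (z : ℝ))]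

lemma dgen_eq_liftZ (i : Fin 6) : dgen i = liftZ (dgenZ i) := by
  funext T
  fin_cases i <;>
    simp [dgen, dgenZ, bas, basZ, liftZ_apply, apply_ite (fun z : ℤ => (z : ℝ))]

lemma d_bas (S0 : Finset (Fin 6)) : d (bas S0) = liftZ (dbZ S0) := by
  unfold d
  rw [Finset.sum_eq_single_of_mem S0 (Finset.mem_univ _)]
  · funext T
    rw [Finset.sum_apply]
    simp only [dbZ, liftZ_apply]
    push_cast
    refine Finset.sum_congr rfl fun t ht => ?_
    simp only [bas_eq_liftZ, dgen_eq_liftZ, wedge_liftZ]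
    simp [basZ, liftZ_apply]
  · intro S _ hS
    simp [bas, hS]

lemma d_add (a b : E) : d (a + b) = d a + d b := by
  unfold d
  rw [← Finset.sum_add_distrib]
  refine Finset.sum_congr rfl fun S _ => ?_
  rw [← Finset.sum_add_distrib]
  refine Finset.sum_congr rfl fun t _ => ?_
  simp [add_mul, add_smul]

lemma d_smul (c : ℝ) (a : E) : d (c • a) = c • d a := by
  unfold d
  rw [Finset.smul_sum]
  refine Finset.sum_congr rfl fun S _ => ?_
  rw [Finset.smul_sum]
  refine Finset.sum_congr rfl fun t _ => ?_
  simp [smul_smul, mul_assoc]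

lemma d_neg (a : E) : d (-a) = -d a := by
  have h := d_smul (-1 : ℝ) a
  simpa using h

lemma d_sub (a b : E) : d (a - b) = d a - d b := by
  rw [sub_eq_add_neg, d_add, d_neg, sub_eq_add_neg]

lemma wedge_smul_left (c : ℝ) (a b : E) : wedge (c • a) b = c • wedge a b := by
  funext S
  simp only [wedge, Pi.smul_apply, smul_eq_mul, Finset.mul_sum]
  exact Finset.sum_congr rfl fun T _ => by ring

lemma wedge_smul_right (c : ℝ) (a b : E) : wedge a (c • b) = c • wedge a b := by
  funext S
  simp only [wedge, Pi.smul_apply, smul_eq_mul, Finset.mul_sum]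
  exact Finset.sum_congr rfl fun T _ => by ring

/-- `e¹⁴ + e²⁵ + e³⁶` with integer coefficients. -/
def xZ : EZ := fun T => basZ {0,3} T + basZ {1,4} T + basZ {2,5} T

/-- The differential of `xZ`, precomputed. -/
def pZ : EZ := fun T =>
  basZ {0,1,5} T - basZ {0,2,4} T + basZ {0,4,5} T - basZ {1,2,3} T
    + basZ {1,3,5} T - basZ {2,3,4} T

/-- The differential of the integer part of `ψ⁻`, assembled pointwise. -/
def mdZ : EZ := fun T =>
  2 * dbZ {0,1,2} T + dbZ {0,1,5} T - dbZ {0,2,4} T - dbZ {0,4,5} T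
    - dbZ {1,2,3} T - dbZ {1,3,5} T + dbZ {2,3,4} T + 2 * dbZ {3,4,5} T

set_option maxRecDepth 1000000 in
lemma k03 : dbZ {0,3} = fun T => basZ {0,4,5} T - basZ {1,2,3} T := by decide
set_option maxRecDepth 1000000 in
lemma k14 : dbZ {1,4} = fun T => basZ {1,3,5} T - basZ {0,2,4} T := by decide
set_option maxRecDepth 1000000 in
lemma k25 : dbZ {2,5} = fun T => basZ {0,1,5} T - basZ {2,3,4} T := by decide
set_option maxRecDepth 1000000 in
lemma k012 : dbZ {0,1,2} = fun _ => 0 := by decide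
set_option maxRecDepth 1000000 in
lemma k015 : dbZ {0,1,5} = fun T => basZ {0,1,3,4} T := by decide
set_option maxRecDepth 1000000 in
lemma k024 : dbZ {0,2,4} = fun T => -basZ {0,2,3,5} T := by decide
set_option maxRecDepth 1000000 in
lemma k045 : dbZ {0,4,5} = fun T => -basZ {1,2,4,5} T := by decide
set_option maxRecDepth 1000000 in
lemma k123 : dbZ {1,2,3} = fun T => -basZ {1,2,4,5} T := by decide
set_option maxRecDepth 1000000 in
lemma k135 : dbZ {1,3,5} = fun T => -basZ {0,2,3,5} T := by decide
set_option maxRecDepth 1000000 in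
lemma k234 : dbZ {2,3,4} = fun T => basZ {0,1,3,4} T := by decide
set_option maxRecDepth 1000000 in
lemma k345 : dbZ {3,4,5} = fun _ => 0 := by decide
set_option maxRecDepth 1000000 in
lemma kw : wedgeZ xZ xZ = fun T =>
    -2 * basZ {0,1,3,4} T - 2 * basZ {0,2,3,5} T - 2 * basZ {1,2,4,5} T := by decide

lemma sqrt3_mul_self : Real.sqrt 3 * Real.sqrt 3 = 3 :=
  Real.mul_self_sqrt (by norm_num)


/-- The exterior system `dω = 3ψ⁺`, `dψ⁻ = 2 ω ∧ ω` of the left-invariant nearly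
pseudo-Kähler structure on `SL(2,ℝ) × SL(2,ℝ)`. -/
theorem stmt_8 : d omega0 = (3 : ℝ) • psiP0 ∧ d psiM0 = (2 : ℝ) • wedge omega0 omega0 := by
  constructor
  · -- dω = 3ψ⁺
    have h1 : d omega0 = (Real.sqrt 3 / 18) • liftZ pZ := by
      unfold omega0
      rw [d_smul, d_add, d_add, d_bas, d_bas, d_bas]
      congr 1
      rw [k03, k14, k25]
      funext T
      simp only [Pi.add_apply, liftZ_apply, pZ]
      push_cast
      ring
    have h2 : (3 : ℝ) • psiP0 = (Real.sqrt 3 / 18) • liftZ pZ := by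
      unfold psiP0
      rw [smul_smul]
      have hc : (3 : ℝ) * (Real.sqrt 3 / 54) = Real.sqrt 3 / 18 := by ring
      rw [hc]
      congr 1
      funext T
      simp only [Pi.add_apply, Pi.sub_apply, liftZ_apply, pZ, bas, basZ,
        apply_ite (fun z : ℤ => (z : ℝ))]
      push_cast
      ring
    rw [h1, h2]
  · -- dψ⁻ = 2 ω ∧ ω
    have h1 : d psiM0 = (1 / 54 : ℝ) • liftZ (wedgeZ xZ xZ) := by
      unfold psiM0
      rw [d_smul, d_add, d_add, d_sub, d_sub, d_sub, d_sub, d_add, d_smul, d_smul,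
        d_bas, d_bas, d_bas, d_bas, d_bas, d_bas, d_bas, d_bas]
      have hm : (2 : ℝ) • liftZ (dbZ {0,1,2}) + liftZ (dbZ {0,1,5}) - liftZ (dbZ {0,2,4})
          - liftZ (dbZ {0,4,5}) - liftZ (dbZ {1,2,3}) - liftZ (dbZ {1,3,5})
          + liftZ (dbZ {2,3,4}) + (2 : ℝ) • liftZ (dbZ {3,4,5})
          = -liftZ (wedgeZ xZ xZ) := by
        rw [k012, k015, k024, k045, k123, k135, k234, k345, kw]
        funext T
        simp only [Pi.add_apply, Pi.sub_apply, Pi.neg_apply, Pi.smul_apply,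
          liftZ_apply, smul_eq_mul]
        push_cast
        ring
      rw [hm]
      funext T
      simp only [Pi.smul_apply, Pi.neg_apply, liftZ_apply, smul_eq_mul]
      ring
    have h2 : (2 : ℝ) • wedge omega0 omega0 = (1 / 54 : ℝ) • liftZ (wedgeZ xZ xZ) := by
      have hx : bas {0,3} + bas {1,4} + bas {2,5} = liftZ xZ := by
        funext T
        simp only [Pi.add_apply, liftZ_apply, xZ, bas, basZ,
          apply_ite (fun z : ℤ => (z : ℝ))]
        push_cast
        ring
      unfold omega0
      rw [hx, wedge_smul_left, wedge_smul_right, wedge_liftZ, smul_smul, smul_smul]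
      congr 1
      rw [mul_assoc, div_mul_div_comm, sqrt3_mul_self]
      norm_num
    rw [h1, h2]
end
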